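/- Suppose f : ℝⁿ → ℝ is p times differentiable with Lipschitz continuous p-th derivative with constant L. Then the gradient of the p-th order Taylor expansion at x satisfies ‖∇f(y) - ∇t_x^p(y)‖ ≤ (L/p!)·‖x - y‖^p for all x, y ∈ ℝⁿ. -/

import Mathlib

open Fin Finset

section lemmas
variable {E W : Type*} [NormedAddCommGroup E] [NormedSpace ℝ E]
  [NormedAddCommGroup W] [NormedSpace ℝ W]

lemma swap_last_two (k : ℕ) (f : E → W) (hf : ContDiff ℝ (k + 2) f) (x : E)
    (m : Fin k → E) (a b : E) :
    iteratedFDeriv ℝ (k + 2) f x (Fin.snoc (Fin.snoc m a) b) =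
      iteratedFDeriv ℝ (k + 2) f x (Fin.snoc (Fin.snoc m b) a) := by
  set Gd : E → (E →L[ℝ] E →L[ℝ] W) := fderiv ℝ (fderiv ℝ f) with hG
  have key : ∀ u v : E, iteratedFDeriv ℝ (k + 2) f x (Fin.snoc (Fin.snoc m u) v) =
      iteratedFDeriv ℝ k Gd x m u v := by
    intro u v
    rw [iteratedFDeriv_succ_apply_right]
    rw [Fin.init_snoc, Fin.snoc_last]
    have h2 := iteratedFDeriv_succ_apply_right (𝕜 := ℝ) (f := fun y => fderiv ℝ f y)
      (x := x) (n := k) (m := Fin.snoc m u)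
    rw [Fin.init_snoc, Fin.snoc_last] at h2
    rw [h2]
  have hsym : ∀ y : E, ∀ v w : E, Gd y v w = Gd y w v := by
    intro y v w
    exact (hf.contDiffAt (x := y)).isSymmSndFDerivAt (by simp only [minSmoothness_of_isRCLikeNormedField]; exact_mod_cast Nat.le_add_left 2 k) v w
  have hGc : ContDiff ℝ k Gd := by
    have h1 : ContDiff ℝ (k + 1) (fderiv ℝ f) :=
      hf.fderiv_right (by exact_mod_cast le_refl (k + 2))
    exact h1.fderiv_right (by exact_mod_cast le_refl (k + 1))
  set Φ : (E →L[ℝ] E →L[ℝ] W) →L[ℝ] (E →L[ℝ] E →L[ℝ] W) :=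
    (ContinuousLinearMap.flipₗᵢ ℝ E E W).toContinuousLinearEquiv.toContinuousLinearMap with hΦ
  have hΦapp : ∀ A : E →L[ℝ] E →L[ℝ] W, Φ A = A.flip := fun A => rfl
  have hΦG : Φ ∘ Gd = Gd := by
    funext y
    exact ContinuousLinearMap.ext fun v => ContinuousLinearMap.ext fun w => hsym y w v
  have hcomp := ContinuousLinearMap.iteratedFDeriv_comp_left (𝕜 := ℝ)
    (F := E →L[ℝ] E →L[ℝ] W) (G := E →L[ℝ] E →L[ℝ] W) Φ (hGc.contDiffAt (x := x)) (i := k) le_rfl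
  rw [hΦG] at hcomp
  have e : iteratedFDeriv ℝ k Gd x m = ((iteratedFDeriv ℝ k Gd x) m).flip := by
    conv_lhs => rw [hcomp]
    rfl
  rw [key, key]
  conv_lhs => rw [e]
  exact ContinuousLinearMap.flip_apply _ _ _

end lemmas

section lem2
set_option linter.unusedSectionVars false
universe u
variable {E : Type u} [NormedAddCommGroup E] [NormedSpace ℝ E]

lemma update_const_last (j : ℕ) (v h : E) :
    Function.update (fun _ : Fin (j + 1) => v) (Fin.last j) h =
      Fin.snoc (fun _ : Fin j => v) h := by
  funext q
  refine Fin.lastCases ?_ (fun q => ?_) q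
  · simp
  · rw [Fin.snoc_castSucc, Function.update_of_ne (Fin.castSucc_lt_last q).ne]

lemma snoc_const (j : ℕ) (v : E) :
    (Fin.snoc (fun _ : Fin j => v) v) = fun _ : Fin (j + 1) => v := by
  funext q
  refine Fin.lastCases ?_ (fun q => ?_) q <;> simp

lemma init_update_castSucc (j : ℕ) (v h : E) (i : Fin (j + 1)) :
    Fin.init (Function.update (fun _ : Fin (j + 2) => v) i.castSucc h) =
      Function.update (fun _ : Fin (j + 1) => v) i h := by
  funext q
  simp [Fin.init, Function.update, Fin.castSucc_inj]

lemma update_to_last (j : ℕ) : ∀ (W : Type u) [NormedAddCommGroup W] [NormedSpace ℝ W]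
    (f : E → W), ContDiff ℝ (j + 1) f → ∀ (x vv h : E) (i : Fin (j + 1)),
    iteratedFDeriv ℝ (j + 1) f x (Function.update (fun _ => vv) i h) =
      iteratedFDeriv ℝ (j + 1) f x (Fin.snoc (fun _ : Fin j => vv) h) := by
  induction j with
  | zero =>
    intro W _ _ f hf x vv h i
    congr 1
    have : i = Fin.last 0 := Fin.ext (by omega)
    rw [this]
    exact update_const_last 0 vv h
  | succ j IH =>
    intro W _ _ f hf x vv h i
    refine Fin.lastCases ?_ (fun i' => ?_) i
    · rw [update_const_last]
    · have hg : ContDiff ℝ (j + 1) (fderiv ℝ f) := hf.fderiv_right (by norm_cast)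
      have e1 : iteratedFDeriv ℝ (j + 1 + 1) f x
          (Function.update (fun _ => vv) i'.castSucc h) =
          iteratedFDeriv ℝ (j + 1) (fderiv ℝ f) x
            (Function.update (fun _ : Fin (j + 1) => vv) i' h) vv := by
        rw [iteratedFDeriv_succ_apply_right,
          show Fin.init (Function.update (fun _ : Fin (j + 1 + 1) => vv) i'.castSucc h) =
            Function.update (fun _ : Fin (j + 1) => vv) i' h from
              _root_.init_update_castSucc j vv h i',
          Function.update_of_ne (Fin.castSucc_lt_last i').ne']
      rw [e1, IH (E →L[ℝ] W) (fderiv ℝ f) hg x vv h i']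
      have e2 : iteratedFDeriv ℝ (j + 1 + 1) f x
            (Fin.snoc (Fin.snoc (fun _ : Fin j => vv) h) vv) =
          iteratedFDeriv ℝ (j + 1) (fderiv ℝ f) x
            (Fin.snoc (fun _ : Fin j => vv) h) vv := by
        rw [iteratedFDeriv_succ_apply_right, Fin.init_snoc, Fin.snoc_last]
      rw [← e2, swap_last_two j f (by exact_mod_cast hf) x _ h vv, snoc_const]

lemma update_eq_right (j : ℕ) {W : Type u} [NormedAddCommGroup W] [NormedSpace ℝ W]
    (f : E → W) (hf : ContDiff ℝ (j + 1) f) (x vv h : E) (i : Fin (j + 1)) :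
    iteratedFDeriv ℝ (j + 1) f x (Function.update (fun _ => vv) i h) =
      iteratedFDeriv ℝ j (fderiv ℝ f) x (fun _ => vv) h := by
  rw [update_to_last j W f hf x vv h i, iteratedFDeriv_succ_apply_right, Fin.init_snoc,
    Fin.snoc_last]


lemma taylor_hasFDerivAt (m : ℕ) {W : Type u} [NormedAddCommGroup W] [NormedSpace ℝ W]
    (f : E → W) (hf : ContDiff ℝ (m + 1) f) (x z : E) :
    HasFDerivAt (fun z => ∑ j ∈ Finset.range (m + 2),
        ((j.factorial : ℝ))⁻¹ • iteratedFDeriv ℝ j f x (fun _ => z - x))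
      (∑ k ∈ Finset.range (m + 1),
        ((k.factorial : ℝ))⁻¹ • iteratedFDeriv ℝ k (fderiv ℝ f) x (fun _ => z - x)) z := by
  classical
  set D : ℕ → (E →L[ℝ] W) := fun j =>
    Nat.rec 0 (fun k _ => ((k.factorial : ℝ))⁻¹ •
      (iteratedFDeriv ℝ k (fderiv ℝ f) x (fun _ => z - x))) j with hD
  have hterm : ∀ j ∈ Finset.range (m + 2), HasFDerivAt
      (fun z => ((j.factorial : ℝ))⁻¹ • iteratedFDeriv ℝ j f x (fun _ => z - x)) (D j) z := by
    intro j hj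
    match j with
    | 0 =>
      have : (fun z : E => ((Nat.factorial 0 : ℝ))⁻¹ •
          iteratedFDeriv ℝ 0 f x (fun _ => z - x)) =
          fun _ : E => ((Nat.factorial 0 : ℝ))⁻¹ • f x := by
        funext z; rw [iteratedFDeriv_zero_apply]
      rw [this]
      exact hasFDerivAt_const _ _
    | k + 1 =>
      have hfk : ContDiff ℝ (k + 1) f := by
        apply hf.of_le
        have : k + 1 ≤ m + 1 := by simp at hj; omega
        exact_mod_cast this
      have h1 : ∀ i : Fin (k + 1), HasFDerivAt (fun z : E => z - x)
          (ContinuousLinearMap.id ℝ E) z := fun i => (hasFDerivAt_id z).sub_const x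
      have h2 := HasFDerivAt.multilinear_comp (iteratedFDeriv ℝ (k + 1) f x) h1
      have h3 := h2.fun_const_smul (((k + 1).factorial : ℝ))⁻¹
      convert h3 using 1
      ext h
      simp only [ContinuousLinearMap.smul_apply, ContinuousLinearMap.coe_sum',
        Finset.sum_apply, ContinuousLinearMap.coe_comp', Function.comp_apply,
        ContinuousLinearMap.coe_id', id_eq,
        ContinuousMultilinearMap.toContinuousLinearMap_apply]
      have key : ∀ i : Fin (k + 1),
          iteratedFDeriv ℝ (k + 1) f x (Function.update (fun _ => z - x) i h) =
            iteratedFDeriv ℝ k (fderiv ℝ f) x (fun _ => z - x) h :=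
        fun i => update_eq_right k f hfk x (z - x) h i
      rw [Finset.sum_congr rfl (fun i _ => key i), Finset.sum_const]
      simp only [Finset.card_univ, Fintype.card_fin, D]
      rw [ContinuousLinearMap.smul_apply, ← Nat.cast_smul_eq_nsmul ℝ, smul_smul]
      congr 1
      rw [Nat.factorial_succ]
      have hk1 : ((k : ℝ) + 1) ≠ 0 := by positivity
      have hk2 : ((k.factorial : ℕ) : ℝ) ≠ 0 := by positivity
      push_cast
      field_simp
  have hsum := HasFDerivAt.fun_sum hterm
  convert hsum using 1
  rw [Finset.sum_range_succ' D (m + 1)]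
  simp only [D]
  rw [Finset.sum_congr rfl (fun k _ => rfl)]
  simp


lemma taylor_remainder (m : ℕ) : ∀ (W : Type u) [NormedAddCommGroup W] [NormedSpace ℝ W]
    (g : E → W), ContDiff ℝ m g → ∀ (L : ℝ), 0 ≤ L →
    (∀ a b, ‖iteratedFDeriv ℝ m g a - iteratedFDeriv ℝ m g b‖ ≤ L * ‖a - b‖) →
    ∀ x y, ‖g y - ∑ j ∈ Finset.range (m + 1),
        ((j.factorial : ℝ))⁻¹ • iteratedFDeriv ℝ j g x (fun _ => y - x)‖ ≤
      L / ((m + 1).factorial : ℝ) * ‖x - y‖ ^ (m + 1) := by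
  induction m with
  | zero =>
    intro W _ _ g hg L hL hLip x y
    have hsum : (∑ j ∈ Finset.range (0 + 1),
        ((j.factorial : ℝ))⁻¹ • iteratedFDeriv ℝ j g x (fun _ => y - x)) = g x := by
      simp [iteratedFDeriv_zero_apply]
    rw [hsum]
    have h0 : ‖iteratedFDeriv ℝ 0 g y - iteratedFDeriv ℝ 0 g x‖ = ‖g y - g x‖ := by
      rw [iteratedFDeriv_zero_eq_comp, Function.comp_apply,
        Function.comp_apply, ← LinearIsometryEquiv.map_sub, LinearIsometryEquiv.norm_map]
    have := hLip y x
    rw [h0] at this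
    simpa [Nat.factorial, norm_sub_rev x y] using this
  | succ m IH =>
    intro W _ _ g hg L hL hLip x y
    set g' := fderiv ℝ g with hg'def
    have hg' : ContDiff ℝ m g' := hg.fderiv_right (by norm_cast)
    have hLip' : ∀ a b, ‖iteratedFDeriv ℝ m g' a - iteratedFDeriv ℝ m g' b‖ ≤ L * ‖a - b‖ := by
      intro a b
      have e : ∀ c : E, iteratedFDeriv ℝ m g' c =
          (continuousMultilinearCurryRightEquiv' ℝ m E W) (iteratedFDeriv ℝ (m + 1) g c) := by
        intro c
        rw [iteratedFDeriv_succ_eq_comp_right]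
        simp only [Function.comp_apply, LinearIsometryEquiv.apply_symm_apply]
        rfl
      rw [e a, e b, ← LinearIsometryEquiv.map_sub, LinearIsometryEquiv.norm_map]
      exact hLip a b
    have IH' := IH (E →L[ℝ] W) g' hg' L hL hLip'
    set S' : E → (E →L[ℝ] W) := fun z => ∑ k ∈ Finset.range (m + 1),
      ((k.factorial : ℝ))⁻¹ • iteratedFDeriv ℝ k g' x (fun _ => z - x) with hS'
    set R : E → W := fun z => g z - ∑ j ∈ Finset.range (m + 2),
      ((j.factorial : ℝ))⁻¹ • iteratedFDeriv ℝ j g x (fun _ => z - x) with hR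
    have hRx : R x = 0 := by
      have : (∑ j ∈ Finset.range (m + 2),
          ((j.factorial : ℝ))⁻¹ • iteratedFDeriv ℝ j g x (fun _ => x - x)) = g x := by
        rw [Finset.sum_range_succ']
        have hz : ∀ i ∈ Finset.range (m + 1), (((i + 1).factorial : ℝ))⁻¹ •
            iteratedFDeriv ℝ (i + 1) g x (fun _ => x - x) = 0 := by
          intro i _
          rw [(iteratedFDeriv ℝ (i + 1) g x).map_coord_zero (0 : Fin (i + 1)) (by simp),
            smul_zero]
        rw [Finset.sum_congr rfl hz]
        simp [iteratedFDeriv_zero_apply]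
      show g x - (∑ j ∈ Finset.range (m + 2),
        ((j.factorial : ℝ))⁻¹ • iteratedFDeriv ℝ j g x (fun _ => x - x)) = 0
      rw [this, sub_self]
    have hRderiv : ∀ z, HasFDerivAt R (g' z - S' z) z := by
      intro z
      exact ((hg.differentiable (by simp) z).hasFDerivAt).sub
        (taylor_hasFDerivAt m g hg x z)
    set c : ℝ → E := fun t => x + t • (y - x) with hc
    have hcd : ∀ t : ℝ, HasDerivAt c (y - x) t := by
      intro t
      simpa only [one_smul] using ((hasDerivAt_id' t).smul_const (y - x)).const_add x
    set φ : ℝ → W := fun t => R (c t) with hφdef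
    have hφ : ∀ t : ℝ, HasDerivAt φ ((g' (c t) - S' (c t)) (y - x)) t :=
      fun t => (hRderiv (c t)).comp_hasDerivAt t (hcd t)
    set C : ℝ := L / (((m + 2).factorial : ℕ) : ℝ) * ‖y - x‖ ^ (m + 2) with hC
    set B : ℝ → ℝ := fun t => C * t ^ (m + 2) with hB
    have hBd : ∀ t : ℝ, HasDerivAt B (C * ((m + 2) * t ^ (m + 1))) t := by
      intro t
      simpa using (hasDerivAt_pow (m + 2) t).const_mul C
    have hCmul : C * (m + 2) = L / (((m + 1).factorial : ℕ) : ℝ) * ‖y - x‖ ^ (m + 2) := by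
      rw [hC]
      have h1 : (((m + 2).factorial : ℕ) : ℝ) = (m + 2) * (((m + 1).factorial : ℕ) : ℝ) := by
        rw [Nat.factorial_succ]; push_cast; ring
      have h2 : ((m : ℝ) + 2) ≠ 0 := by positivity
      have h3 : (((m + 1).factorial : ℕ) : ℝ) ≠ 0 := by positivity
      rw [h1]
      field_simp
    have bound : ∀ t ∈ Set.Ico (0 : ℝ) 1,
        ‖(g' (c t) - S' (c t)) (y - x)‖ ≤ C * ((m + 2) * t ^ (m + 1)) := by
      intro t ht
      have h1 : ‖(g' (c t) - S' (c t)) (y - x)‖ ≤ ‖g' (c t) - S' (c t)‖ * ‖y - x‖ :=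
        (g' (c t) - S' (c t)).le_opNorm (y - x)
      have h2 : ‖g' (c t) - S' (c t)‖ ≤
          L / (((m + 1).factorial : ℕ) : ℝ) * ‖x - c t‖ ^ (m + 1) := IH' x (c t)
      have h3 : ‖x - c t‖ = t * ‖y - x‖ := by
        show ‖x - (x + t • (y - x))‖ = t * ‖y - x‖
        rw [sub_add_cancel_left, norm_neg, norm_smul, Real.norm_eq_abs, abs_of_nonneg ht.1]
      calc ‖(g' (c t) - S' (c t)) (y - x)‖ ≤ ‖g' (c t) - S' (c t)‖ * ‖y - x‖ := h1
        _ ≤ (L / (((m + 1).factorial : ℕ) : ℝ) * ‖x - c t‖ ^ (m + 1)) * ‖y - x‖ := by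
            apply mul_le_mul_of_nonneg_right h2 (norm_nonneg _)
        _ = C * ((m + 2) * t ^ (m + 1)) := by
            rw [h3, mul_pow]
            rw [show C * ((m + 2 : ℝ) * t ^ (m + 1)) = (C * ((m : ℝ) + 2)) * t ^ (m + 1) by ring,
              hCmul, pow_succ]
            ring
    have hφ0 : φ 0 = 0 := by
      have hc0 : c 0 = x := by simp [hc]
      show R (c 0) = 0
      rw [hc0, hRx]
    have ha : ‖φ 0‖ ≤ B 0 := by
      rw [hφ0, hB]
      simp [zero_pow (by omega : m + 2 ≠ 0)]
    have key := image_norm_le_of_norm_deriv_right_le_deriv_boundary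
      (fun t _ => (hφ t).continuousAt.continuousWithinAt)
      (fun t _ => (hφ t).hasDerivWithinAt) ha hBd bound
      (Set.right_mem_Icc.mpr zero_le_one)
    have hφ1 : φ 1 = R y := by
      have hc1 : c 1 = y := by simp [hc]
      show R (c 1) = R y
      rw [hc1]
    have hB1 : B 1 = C := by simp [hB]
    rw [hφ1, hB1] at key
    have goal_eq : R y = g y - ∑ j ∈ Finset.range (m + 1 + 1),
        ((j.factorial : ℝ))⁻¹ • iteratedFDeriv ℝ j g x (fun _ => y - x) := rfl
    rw [← goal_eq]
    refine key.trans (le_of_eq ?_)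
    rw [hC, norm_sub_rev x y]

end lem2

theorem stmt_8 {n : ℕ} (p : ℕ) (hp : 2 ≤ p) (L : ℝ) (hL : 0 < L)
    (f : EuclideanSpace ℝ (Fin n) → ℝ)
    (hf : ContDiff ℝ p f)
    (hLip : ∀ x y, ‖iteratedFDeriv ℝ p f x - iteratedFDeriv ℝ p f y‖ ≤ L * ‖x - y‖) :
    ∀ x y,
      ‖gradient f y - gradient (fun z => ∑ j ∈ Finset.range (p + 1),
          ((j.factorial : ℝ))⁻¹ * iteratedFDeriv ℝ j f x (fun _ => z - x)) y‖ ≤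
        L / (p.factorial : ℝ) * ‖x - y‖ ^ p := by
  obtain ⟨m, rfl⟩ : ∃ m, p = m + 2 := ⟨p - 2, by omega⟩
  intro x y
  have hg : ContDiff ℝ (m + 1) (fderiv ℝ f) := hf.fderiv_right (by norm_cast)
  have hLip' : ∀ a b : EuclideanSpace ℝ (Fin n),
      ‖iteratedFDeriv ℝ (m + 1) (fderiv ℝ f) a - iteratedFDeriv ℝ (m + 1) (fderiv ℝ f) b‖ ≤
      L * ‖a - b‖ := by
    intro a b
    have e : ∀ c : EuclideanSpace ℝ (Fin n), iteratedFDeriv ℝ (m + 2) f c =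
        (continuousMultilinearCurryRightEquiv' ℝ (m + 1) (EuclideanSpace ℝ (Fin n)) ℝ).symm
          (iteratedFDeriv ℝ (m + 1) (fun y => fderiv ℝ f y) c) := fun c =>
      iteratedFDeriv_succ_eq_comp_right
    have h := hLip a b
    rw [e a, e b, ← LinearIsometryEquiv.map_sub, LinearIsometryEquiv.norm_map] at h
    exact h
  have est := taylor_remainder (m + 1) (EuclideanSpace ℝ (Fin n) →L[ℝ] ℝ) (fderiv ℝ f) hg L
    hL.le hLip' x y
  have hPd : HasFDerivAt (fun z => ∑ j ∈ Finset.range (m + 2 + 1),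
      ((j.factorial : ℝ))⁻¹ * iteratedFDeriv ℝ j f x (fun _ => z - x))
      (∑ k ∈ Finset.range (m + 2), ((k.factorial : ℝ))⁻¹ •
        iteratedFDeriv ℝ k (fderiv ℝ f) x (fun _ => y - x)) y := by
    have h := taylor_hasFDerivAt (m + 1) f (by exact_mod_cast hf) x y
    simp only [smul_eq_mul] at h
    exact h
  have hgrad : ∀ (φ : EuclideanSpace ℝ (Fin n) → ℝ) (z : EuclideanSpace ℝ (Fin n)),
      gradient φ z =
        (InnerProductSpace.toDual ℝ (EuclideanSpace ℝ (Fin n))).symm (fderiv ℝ φ z) :=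
    fun φ z => rfl
  rw [hgrad, hgrad, hPd.fderiv, ← LinearIsometryEquiv.map_sub, LinearIsometryEquiv.norm_map]
  exact est
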